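/- For n ≥ 1, the number of zero forcing sets of the path P_n of size i equals C(n,i) − C(n−i−1, i), for each 1 ≤ i ≤ n (with the convention C(a,b)=0 when 0 ≤ a < b). -/
import Mathlib


/-- The set of vertices eventually colored ("forced") by the zero forcing process
starting from the initially colored set `S`: a colored vertex with exactly one
uncolored neighbor forces that neighbor to become colored. -/
inductive SimpleGraph.Forced {V : Type*} (G : SimpleGraph V) (S : Set V) : V → Prop
  | mem {v : V} : v ∈ S → G.Forced S v
  | force {u v : V} : G.Adj u v → G.Forced S u →
      (∀ w, G.Adj u w → w ≠ v → G.Forced S w) → G.Forced S v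

/-- `S` is a zero forcing set of `G` if the zero forcing process starting from `S`
colors every vertex. -/
def SimpleGraph.IsZeroForcingSet {V : Type*} (G : SimpleGraph V) (S : Set V) : Prop :=
  ∀ v, G.Forced S v

/-- `z(G;i)`: the number of zero forcing sets of `G` of size `i`. -/
noncomputable def SimpleGraph.zcount {V : Type*} [Fintype V] (G : SimpleGraph V) (i : ℕ) : ℕ :=
  Nat.card {S : Finset V // S.card = i ∧ G.IsZeroForcingSet ↑S}

/-- `Z(G)`: the zero forcing number, the minimum size of a zero forcing set. -/
noncomputable def SimpleGraph.zfNumber {V : Type*} [Fintype V] (G : SimpleGraph V) : ℕ :=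
  sInf {i | ∃ S : Finset V, S.card = i ∧ G.IsZeroForcingSet ↑S}

/-- The zero forcing polynomial `𝒵(G;x) = ∑_{i=1}^n z(G;i) x^i`. -/
noncomputable def SimpleGraph.zfPoly {V : Type*} [Fintype V] (G : SimpleGraph V) : Polynomial ℤ :=
  ∑ i ∈ Finset.Icc 1 (Fintype.card V), Polynomial.C (G.zcount i : ℤ) * Polynomial.X ^ i

/-- The path `P_n` on `n` vertices. -/
def pathG (n : ℕ) : SimpleGraph (Fin n) :=
  SimpleGraph.fromRel (fun i j => (i : ℕ) + 1 = j)

/-- The cycle `C_n` on `n` vertices. -/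
def cycleG (n : ℕ) : SimpleGraph (Fin n) :=
  SimpleGraph.fromRel (fun i j => ((i : ℕ) + 1) % n = j)

namespace ZFP


lemma path_adj {n : ℕ} {a b : Fin n} :
    (pathG n).Adj a b ↔ ((a : ℕ) + 1 = b ∨ (b : ℕ) + 1 = a) := by
  constructor
  · rintro ⟨-, h | h⟩
    · exact Or.inl h
    · exact Or.inr h
  · intro h
    refine ⟨?_, h⟩
    intro e; subst e; omega

variable {n : ℕ} {S : Set (Fin n)}

lemma forced_congr {v w : Fin n} (h : (pathG n).Forced S v) (e : (v : ℕ) = (w : ℕ)) :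
    (pathG n).Forced S w := by
  have : v = w := Fin.ext e
  exact this ▸ h

lemma step_up {k : ℕ} (hk : k + 1 < n)
    (h0 : (pathG n).Forced S ⟨k, by omega⟩)
    (h1 : 1 ≤ k → (pathG n).Forced S ⟨k - 1, by omega⟩) :
    (pathG n).Forced S ⟨k + 1, hk⟩ := by
  refine SimpleGraph.Forced.force (u := ⟨k, by omega⟩) (path_adj.2 (Or.inl rfl)) h0 ?_
  intro w hw hne
  rcases path_adj.1 hw with h | h
  · simp only [Fin.val_mk] at h
    exact absurd (Fin.ext h.symm) hne
  · simp only [Fin.val_mk] at h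
    have hk1 : 1 ≤ k := by
      rcases Nat.eq_zero_or_pos k with rfl | hp
      · exact absurd h (by omega)
      · exact hp
    exact forced_congr (h1 hk1) (by simp; omega)

lemma step_down {k : ℕ} (hk : k + 1 < n)
    (h0 : (pathG n).Forced S ⟨k + 1, hk⟩)
    (h1 : ∀ _h : k + 2 < n, (pathG n).Forced S ⟨k + 2, _h⟩) :
    (pathG n).Forced S ⟨k, by omega⟩ := by
  refine SimpleGraph.Forced.force (u := ⟨k + 1, hk⟩) (path_adj.2 (Or.inr rfl)) h0 ?_
  intro w hw hne
  rcases path_adj.1 hw with h | h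
  · simp only [Fin.val_mk] at h
    have hk2 : k + 2 < n := by have := w.isLt; omega
    exact forced_congr (h1 hk2) (by simp; omega)
  · simp only [Fin.val_mk] at h
    exact absurd (Fin.ext (by simp; omega)) hne

lemma forced_all_of_zero (h0 : (0 : ℕ) < n) (hS : (⟨0, h0⟩ : Fin n) ∈ S) :
    ∀ k (hk : k < n), (pathG n).Forced S ⟨k, hk⟩ := by
  intro k
  induction k using Nat.strong_induction_on with
  | _ k ih =>
    intro hk
    match k with
    | 0 => exact SimpleGraph.Forced.mem hS
    | k + 1 =>
      exact step_up hk (ih k (by omega) (by omega)) (fun h1 => ih (k - 1) (by omega) (by omega))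

lemma forced_all_of_last (h0 : (0 : ℕ) < n) (hS : (⟨n - 1, by omega⟩ : Fin n) ∈ S) :
    ∀ k (hk : k < n), (pathG n).Forced S ⟨k, hk⟩ := by
  have key : ∀ d k, k + d = n - 1 → ∀ (hk : k < n), (pathG n).Forced S ⟨k, hk⟩ := by
    intro d
    induction d using Nat.strong_induction_on with
    | _ d ih =>
      intro k hkd hk
      match d with
      | 0 => exact forced_congr (SimpleGraph.Forced.mem hS) (by simp; omega)
      | d + 1 =>
        have h1 : k + 1 < n := by omega
        exact step_down h1 (ih d (by omega) (k + 1) (by omega) h1)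
          (fun h2 => ih (d - 1) (by omega) (k + 2) (by omega) h2)
  intro k hk
  exact key (n - 1 - k) k (by omega) hk

lemma forced_all_of_pair {k : ℕ} (hk : k + 1 < n)
    (ha : (⟨k, by omega⟩ : Fin n) ∈ S) (hb : (⟨k + 1, hk⟩ : Fin n) ∈ S) :
    ∀ m (hm : m < n), (pathG n).Forced S ⟨m, hm⟩ := by
  have up : ∀ d (hd : k + 1 + d < n), (pathG n).Forced S ⟨k + 1 + d, hd⟩ := by
    intro d
    induction d using Nat.strong_induction_on with
    | _ d ih =>
      intro hd
      match d with
      | 0 => exact SimpleGraph.Forced.mem hb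
      | d + 1 =>
        refine forced_congr (v := ⟨(k + 1 + d) + 1, by omega⟩) ?_ (by simp; ring)
        refine step_up (by omega) (ih d (by omega) (by omega)) (fun h1 => ?_)
        match d with
        | 0 => exact forced_congr (SimpleGraph.Forced.mem ha) (by simp)
        | d + 1 => exact forced_congr (ih d (by omega) (by omega)) (by simp)
  have down : ∀ d, d ≤ k → (pathG n).Forced S ⟨k - d, by omega⟩ := by
    intro d
    induction d using Nat.strong_induction_on with
    | _ d ih =>
      intro hd
      match d with
      | 0 => exact SimpleGraph.Forced.mem ha
      | d + 1 =>
        have h1 : (k - (d + 1)) + 1 < n := by omega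
        refine forced_congr (v := ⟨k - (d + 1), by omega⟩) ?_ (by simp)
        refine step_down h1 ?_ (fun h2 => ?_)
        · exact forced_congr (ih d (by omega) (by omega)) (by simp; omega)
        · match d with
          | 0 => exact forced_congr (SimpleGraph.Forced.mem hb) (by simp; omega)
          | d + 1 => exact forced_congr (ih d (by omega) (by omega)) (by simp; omega)
  intro m hm
  rcases le_or_gt m k with h | h
  · exact forced_congr (down (k - m) (by omega)) (by simp; omega)
  · exact forced_congr (up (m - k - 1) (by omega)) (by simp; omega)


def Bad (n : ℕ) (S : Finset (Fin n)) : Prop :=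
  (∀ a ∈ S, (a : ℕ) ≠ 0) ∧ (∀ a ∈ S, (a : ℕ) ≠ n - 1) ∧
    (∀ a ∈ S, ∀ b ∈ S, (a : ℕ) + 1 ≠ (b : ℕ))

lemma forced_mem_of_bad {n : ℕ} {S : Finset (Fin n)} (hbad : Bad n S) :
    ∀ v, (pathG n).Forced (↑S) v → v ∈ S := by
  intro v hv
  induction hv with
  | mem h => exact h
  | @force u v hadj hu hall ihu ihall =>
    exfalso
    obtain ⟨hb0, hb1, hb2⟩ := hbad
    have hu' : u ∈ S := ihu
    have h0 : (u : ℕ) ≠ 0 := hb0 u hu'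
    have h1 : (u : ℕ) ≠ n - 1 := hb1 u hu'
    have hun : (u : ℕ) < n := u.isLt
    have hplus : (u : ℕ) + 1 < n := by omega
    set wp : Fin n := ⟨(u : ℕ) + 1, hplus⟩ with hwp
    set wm : Fin n := ⟨(u : ℕ) - 1, by omega⟩ with hwm
    have hadjp : (pathG n).Adj u wp := path_adj.2 (Or.inl rfl)
    have hadjm : (pathG n).Adj u wm := path_adj.2 (Or.inr (by simp [hwm]; omega))
    rcases path_adj.1 hadj with h | h
    · -- v = wp; the other neighbor wm ∈ S
      have hne : wm ≠ v := by
        intro e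
        rw [← e] at h
        simp [hwm] at h
        omega
      have : wm ∈ S := ihall wm hadjm hne
      exact hb2 wm this u hu' (by simp [hwm]; omega)
    · -- v = wm; other neighbor wp ∈ S
      have hne : wp ≠ v := by
        intro e
        rw [← e] at h
        simp [hwp] at h
        omega
      have : wp ∈ S := ihall wp hadjp hne
      exact hb2 u hu' wp this (by simp [hwp])

lemma zfs_iff_not_bad {n : ℕ} (hn : 1 ≤ n) (S : Finset (Fin n)) :
    (pathG n).IsZeroForcingSet ↑S ↔ ¬ Bad n S := by
  constructor
  · intro hz hbad
    have h0 : (0:ℕ) < n := hn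
    have : (⟨0, h0⟩ : Fin n) ∈ S := forced_mem_of_bad hbad _ (hz ⟨0, h0⟩)
    exact hbad.1 _ this rfl
  · intro hbad
    unfold Bad at hbad
    intro v
    have hv := v.isLt
    have hbad' : (∃ a ∈ S, (a : ℕ) = 0) ∨ (∃ a ∈ S, (a : ℕ) = n - 1) ∨
        (∃ a ∈ S, ∃ b ∈ S, (a : ℕ) + 1 = (b : ℕ)) := by
      by_contra hcon
      push_neg at hcon
      exact hbad ⟨hcon.1, hcon.2.1, hcon.2.2⟩
    rcases hbad' with ⟨a, ha, ha0⟩ | ⟨a, ha, ha1⟩ | ⟨a, ha, b, hb, hab⟩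
    · have : (⟨0, hn⟩ : Fin n) ∈ (↑S : Set (Fin n)) := by
        have : a = ⟨0, hn⟩ := Fin.ext ha0
        exact_mod_cast this ▸ ha
      have := forced_all_of_zero hn this v hv
      simpa using this
    · have : (⟨n - 1, by omega⟩ : Fin n) ∈ (↑S : Set (Fin n)) := by
        have : a = ⟨n - 1, by omega⟩ := Fin.ext ha1
        exact_mod_cast this ▸ ha
      have := forced_all_of_last hn this v hv
      simpa using this
    · have hk : (a : ℕ) + 1 < n := by have := b.isLt; omega
      have ha' : (⟨(a : ℕ), by omega⟩ : Fin n) ∈ (↑S : Set (Fin n)) := by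
        have : a = ⟨(a : ℕ), by omega⟩ := Fin.ext rfl
        exact_mod_cast this ▸ ha
      have hb' : (⟨(a : ℕ) + 1, hk⟩ : Fin n) ∈ (↑S : Set (Fin n)) := by
        have : b = ⟨(a : ℕ) + 1, hk⟩ := Fin.ext hab.symm
        exact_mod_cast this ▸ hb
      have := forced_all_of_pair hk ha' hb' v hv
      simpa using this


open Finset

instance Bad.decidable (n : ℕ) : DecidablePred (Bad n) := fun S => by
  unfold Bad; infer_instance

lemma image_orderEmbOfFin {α : Type*} [LinearOrder α] [DecidableEq α] (s : Finset α) {k : ℕ} (h : s.card = k) :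
    Finset.univ.image (s.orderEmbOfFin h) = s := by
  ext x
  simp only [Finset.mem_image, Finset.mem_univ, true_and]
  rw [← Set.mem_range, Finset.range_orderEmbOfFin, Finset.mem_coe]

lemma card_filter_card (α : Type*) [Fintype α] [DecidableEq α] (k : ℕ) :
    ((Finset.univ : Finset (Finset α)).filter (fun s => s.card = k)).card
      = (Fintype.card α).choose k := by
  have he : (Finset.univ.filter (fun s : Finset α => s.card = k))
      = Finset.univ.powersetCard k := by
    ext s
    simp [Finset.mem_powersetCard, Finset.subset_univ]
  rw [he, Finset.card_powersetCard, Finset.card_univ]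

section gaps

variable {n i : ℕ} {S : Finset (Fin n)} (hbad : Bad n S) (hcard : S.card = i)

lemma gap_step (hbad : Bad n S) (hcard : S.card = i) {j : ℕ} (hj : j + 1 < i) :
    ((S.orderEmbOfFin hcard ⟨j, by omega⟩ : Fin n) : ℕ) + 2
      ≤ ((S.orderEmbOfFin hcard ⟨j + 1, hj⟩ : Fin n) : ℕ) := by
  set f := S.orderEmbOfFin hcard
  have hlt : f ⟨j, by omega⟩ < f ⟨j + 1, hj⟩ :=
    (S.orderEmbOfFin hcard).strictMono (by simp [Fin.lt_def])
  have hne := hbad.2.2 (f ⟨j, by omega⟩) (Finset.orderEmbOfFin_mem S hcard _)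
    (f ⟨j + 1, hj⟩) (Finset.orderEmbOfFin_mem S hcard _)
  have := Fin.lt_def.1 hlt
  omega

lemma gap_gen (hbad : Bad n S) (hcard : S.card = i) :
    ∀ d j (hj : j + d < i),
      ((S.orderEmbOfFin hcard ⟨j, by omega⟩ : Fin n) : ℕ) + 2 * d
        ≤ ((S.orderEmbOfFin hcard ⟨j + d, hj⟩ : Fin n) : ℕ) := by
  intro d
  induction d with
  | zero => intro j hj; simp
  | succ d ih =>
    intro j hj
    have h1 := ih j (by omega)
    have h2 := gap_step hbad hcard (j := j + d) (by omega)
    have e : (⟨j + d + 1, by omega⟩ : Fin i) = ⟨j + (d + 1), hj⟩ := by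
      apply Fin.ext; simp; omega
    rw [e] at h2
    omega

lemma gap_lo (hbad : Bad n S) (hcard : S.card = i) (j : Fin i) :
    1 + 2 * (j : ℕ) ≤ ((S.orderEmbOfFin hcard j : Fin n) : ℕ) := by
  have h0 : 0 < i := by have := j.isLt; omega
  have hmem := Finset.orderEmbOfFin_mem S hcard ⟨0, h0⟩
  have h1 : ((S.orderEmbOfFin hcard ⟨0, h0⟩ : Fin n) : ℕ) ≠ 0 := hbad.1 _ hmem
  have h2 := gap_gen hbad hcard (j : ℕ) 0 (by simpa using j.isLt)
  have e : (⟨0 + (j : ℕ), by simpa using j.isLt⟩ : Fin i) = j := by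
    apply Fin.ext; simp
  rw [e] at h2
  omega

lemma gap_hi (hbad : Bad n S) (hcard : S.card = i) (j : Fin i) :
    ((S.orderEmbOfFin hcard j : Fin n) : ℕ) + 2 * (i - 1 - (j : ℕ)) ≤ n - 2 := by
  have h0 : 0 < i := by have := j.isLt; omega
  have hlast : i - 1 < i := by omega
  have hmem := Finset.orderEmbOfFin_mem S hcard ⟨i - 1, hlast⟩
  have h1 : ((S.orderEmbOfFin hcard ⟨i - 1, hlast⟩ : Fin n) : ℕ) ≠ n - 1 := hbad.2.1 _ hmem
  have hvn : ((S.orderEmbOfFin hcard ⟨i - 1, hlast⟩ : Fin n) : ℕ) < n :=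
    (S.orderEmbOfFin hcard ⟨i - 1, hlast⟩).isLt
  have h2 := gap_gen hbad hcard (i - 1 - (j : ℕ)) (j : ℕ) (by have := j.isLt; omega)
  have e : (⟨(j : ℕ) + (i - 1 - (j : ℕ)), by have := j.isLt; omega⟩ : Fin i)
      = ⟨i - 1, hlast⟩ := by
    apply Fin.ext; simp; have := j.isLt; omega
  rw [e] at h2
  have e2 : (⟨(j : ℕ), by have := j.isLt; omega⟩ : Fin i) = j := by apply Fin.ext; rfl
  rw [e2] at h2
  omega

end gaps

/-- the map from subsets of `Fin (n-1-i)` of size `i` to bad subsets of `Fin n`. -/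
def up (n i : ℕ) (T : Finset (Fin (n - 1 - i))) (hT : T.card = i) : Finset (Fin n) :=
  Finset.image (fun j : Fin i =>
    (⟨((T.orderEmbOfFin hT j : Fin (n - 1 - i)) : ℕ) + 1 + (j : ℕ),
      by have := (T.orderEmbOfFin hT j).isLt; have := j.isLt; omega⟩ : Fin n)) Finset.univ

lemma up_strictMono (n i : ℕ) (T : Finset (Fin (n - 1 - i))) (hT : T.card = i) :
    StrictMono (fun j : Fin i =>
      (⟨((T.orderEmbOfFin hT j : Fin (n - 1 - i)) : ℕ) + 1 + (j : ℕ),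
        by have := (T.orderEmbOfFin hT j).isLt; have := j.isLt; omega⟩ : Fin n)) := by
  intro j k hjk
  have h1 : T.orderEmbOfFin hT j < T.orderEmbOfFin hT k := (T.orderEmbOfFin hT).strictMono hjk
  have h2 := Fin.lt_def.1 h1
  have h3 := Fin.lt_def.1 hjk
  rw [Fin.lt_def]
  simp
  omega

lemma up_card (n i : ℕ) (T : Finset (Fin (n - 1 - i))) (hT : T.card = i) :
    (up n i T hT).card = i := by
  rw [up, Finset.card_image_of_injective _ (up_strictMono n i T hT).injective,
    Finset.card_univ, Fintype.card_fin]

lemma up_bad (n i : ℕ) (T : Finset (Fin (n - 1 - i))) (hT : T.card = i) :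
    Bad n (up n i T hT) := by
  refine ⟨?_, ?_, ?_⟩
  · intro a ha
    rw [up, Finset.mem_image] at ha
    obtain ⟨j, -, rfl⟩ := ha
    simp
  · intro a ha
    rw [up, Finset.mem_image] at ha
    obtain ⟨j, -, rfl⟩ := ha
    have hx := (T.orderEmbOfFin hT j).isLt
    have hj := j.isLt
    simp
    omega
  · intro a ha b hb hab
    rw [up, Finset.mem_image] at ha hb
    obtain ⟨j, -, rfl⟩ := ha
    obtain ⟨k, -, rfl⟩ := hb
    simp at hab
    rcases lt_trichotomy j k with h | h | h
    · have h1 := Fin.lt_def.1 ((T.orderEmbOfFin hT).strictMono h)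
      have h2 := Fin.lt_def.1 h
      omega
    · subst h; omega
    · have h1 := Fin.lt_def.1 ((T.orderEmbOfFin hT).strictMono h)
      have h2 := Fin.lt_def.1 h
      omega

lemma up_orderEmbOfFin (n i : ℕ) (T : Finset (Fin (n - 1 - i))) (hT : T.card = i) :
    (fun j : Fin i =>
      (⟨((T.orderEmbOfFin hT j : Fin (n - 1 - i)) : ℕ) + 1 + (j : ℕ),
        by have := (T.orderEmbOfFin hT j).isLt; have := j.isLt; omega⟩ : Fin n))
      = (up n i T hT).orderEmbOfFin (up_card n i T hT) := by
  apply Finset.orderEmbOfFin_unique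
  · intro j
    rw [up, Finset.mem_image]
    exact ⟨j, Finset.mem_univ j, rfl⟩
  · exact up_strictMono n i T hT

lemma up_inj (n i : ℕ) (T T' : Finset (Fin (n - 1 - i))) (hT : T.card = i)
    (hT' : T'.card = i) (he : up n i T hT = up n i T' hT') : T = T' := by
  have h1 := up_orderEmbOfFin n i T hT
  have h2 := up_orderEmbOfFin n i T' hT'
  have hmem : ∀ j : Fin i,
      (⟨((T.orderEmbOfFin hT j : Fin (n - 1 - i)) : ℕ) + 1 + (j : ℕ),
        by have := (T.orderEmbOfFin hT j).isLt; have := j.isLt; omega⟩ : Fin n)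
        ∈ up n i T' hT' := by
    intro j
    rw [← he, up, Finset.mem_image]
    exact ⟨j, Finset.mem_univ j, rfl⟩
  have h3 := Finset.orderEmbOfFin_unique (up_card n i T' hT') hmem (up_strictMono n i T hT)
  have h4 : (fun j : Fin i =>
      (⟨((T.orderEmbOfFin hT j : Fin (n - 1 - i)) : ℕ) + 1 + (j : ℕ),
        by have := (T.orderEmbOfFin hT j).isLt; have := j.isLt; omega⟩ : Fin n))
      = (fun j : Fin i =>
      (⟨((T'.orderEmbOfFin hT' j : Fin (n - 1 - i)) : ℕ) + 1 + (j : ℕ),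
        by have := (T'.orderEmbOfFin hT' j).isLt; have := j.isLt; omega⟩ : Fin n)) :=
    h3.trans h2.symm
  have h5 : ∀ j : Fin i, T.orderEmbOfFin hT j = T'.orderEmbOfFin hT' j := by
    intro j
    have := congrFun h4 j
    have hv := congrArg Fin.val this
    simp only [Fin.val_mk] at hv
    exact Fin.ext (by omega)
  rw [← image_orderEmbOfFin T hT, ← image_orderEmbOfFin T' hT']
  exact Finset.image_congr (fun j _ => h5 j)

lemma up_surj (n i : ℕ) (Sb : Finset (Fin n)) (hc : Sb.card = i) (hbad : Bad n Sb) :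
    ∃ T : Finset (Fin (n - 1 - i)), ∃ hT : T.card = i, up n i T hT = Sb := by
  classical
  have hlo := gap_lo hbad hc
  have hhi := gap_hi hbad hc
  set f := Sb.orderEmbOfFin hc with hf
  have hbnd : ∀ j : Fin i, ((f j : Fin n) : ℕ) - 1 - (j : ℕ) < n - 1 - i := by
    intro j
    have h1 := hlo j
    have h2 := hhi j
    have h3 := j.isLt
    omega
  set gfun : Fin i → Fin (n - 1 - i) := fun j => ⟨((f j : Fin n) : ℕ) - 1 - (j : ℕ), hbnd j⟩
    with hg
  have gmono : StrictMono gfun := by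
    intro j k hjk
    have h3 := Fin.lt_def.1 hjk
    have h4 := gap_gen hbad hc ((k : ℕ) - (j : ℕ)) (j : ℕ) (by have := k.isLt; omega)
    have e1 : (⟨(j : ℕ), by have := j.isLt; omega⟩ : Fin i) = j := Fin.ext rfl
    have e2 : (⟨(j : ℕ) + ((k : ℕ) - (j : ℕ)), by have := k.isLt; omega⟩ : Fin i) = k :=
      Fin.ext (by simp; omega)
    rw [e1, e2, ← hf] at h4
    have h5 := hlo j
    rw [Fin.lt_def]
    simp only [hg, Fin.val_mk]
    omega
  have hTcard : (Finset.image gfun Finset.univ).card = i := by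
    rw [Finset.card_image_of_injective _ gmono.injective, Finset.card_univ, Fintype.card_fin]
  refine ⟨Finset.image gfun Finset.univ, hTcard, ?_⟩
  · rw [up]
    have hmem : ∀ j : Fin i, gfun j ∈ Finset.image gfun Finset.univ := by
      intro j; exact Finset.mem_image.2 ⟨j, Finset.mem_univ j, rfl⟩
    have hord := Finset.orderEmbOfFin_unique hTcard hmem gmono
    have key : (fun j : Fin i =>
        (⟨(((Finset.image gfun Finset.univ).orderEmbOfFin hTcard j : Fin (n - 1 - i)) : ℕ)
          + 1 + (j : ℕ), by
            have := ((Finset.image gfun Finset.univ).orderEmbOfFin hTcard j).isLt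
            have := j.isLt; omega⟩ : Fin n)) = fun j : Fin i => (f j : Fin n) := by
      funext j
      apply Fin.ext
      simp only [Fin.val_mk]
      rw [← congrFun hord j]
      simp only [hg, Fin.val_mk]
      have := hlo j
      omega
    rw [key]
    exact image_orderEmbOfFin Sb hc

lemma card_bad_eq (n i : ℕ) :
    ((Finset.univ : Finset (Finset (Fin n))).filter (fun S => S.card = i ∧ Bad n S)).card
      = (n - 1 - i).choose i := by
  classical
  rw [show (n - 1 - i) = Fintype.card (Fin (n - 1 - i)) from (Fintype.card_fin _).symm,
    ← card_filter_card (Fin (n - 1 - i)) i]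
  symm
  refine Finset.card_bij
    (s := (Finset.univ : Finset (Finset (Fin (n - 1 - i)))).filter (fun T => T.card = i))
    (t := (Finset.univ : Finset (Finset (Fin n))).filter (fun S => S.card = i ∧ Bad n S))
    (fun T hT => up n i T (by simpa using (Finset.mem_filter.1 hT).2))
    ?_ ?_ ?_
  · intro T hT
    simp only [Finset.mem_filter, Finset.mem_univ, true_and]
    exact ⟨up_card n i T _, up_bad n i T _⟩
  · intro T hT T' hT' he
    have hTc : T.card = i := by simpa using (Finset.mem_filter.1 hT).2
    have hT'c : T'.card = i := by simpa using (Finset.mem_filter.1 hT').2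
    exact up_inj n i T T' hTc hT'c he
  · intro Sb hSb
    have h := Finset.mem_filter.1 hSb
    obtain ⟨T, hT, hup⟩ := up_surj n i Sb h.2.1 h.2.2
    exact ⟨T, by simp [hT], hup⟩


end ZFP

/-- For `n ≥ 1` and `1 ≤ i ≤ n`, the path `P_n` has exactly
`C(n,i) − C(n−i−1,i)` zero forcing sets of size `i`. -/
theorem zcount_path (n i : ℕ) (hn : 1 ≤ n) (h1 : 1 ≤ i) (h2 : i ≤ n) :
    (pathG n).zcount i = n.choose i - (n - i - 1).choose i := by
  classical
  rw [SimpleGraph.zcount, Nat.card_eq_fintype_card, Fintype.card_subtype]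
  have hfe : (Finset.univ.filter (fun S : Finset (Fin n) =>
      S.card = i ∧ (pathG n).IsZeroForcingSet ↑S))
      = (Finset.univ.filter (fun S : Finset (Fin n) => S.card = i)).filter
          (fun S => ¬ ZFP.Bad n S) := by
    ext S
    simp only [Finset.mem_filter, Finset.mem_univ, true_and, and_assoc]
    rw [ZFP.zfs_iff_not_bad hn S]
  rw [hfe]
  have hsplit := Finset.card_filter_add_card_filter_not
    (s := Finset.univ.filter (fun S : Finset (Fin n) => S.card = i)) (p := ZFP.Bad n)
  have hA : (Finset.univ.filter (fun S : Finset (Fin n) => S.card = i)).card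
      = n.choose i := by
    rw [ZFP.card_filter_card, Fintype.card_fin]
  have hB : ((Finset.univ.filter (fun S : Finset (Fin n) => S.card = i)).filter
      (ZFP.Bad n)).card = (n - 1 - i).choose i := by
    rw [← ZFP.card_bad_eq n i]
    congr 1
    ext S
    simp only [Finset.mem_filter, Finset.mem_univ, true_and, and_assoc]
  have he : n - 1 - i = n - i - 1 := by omega
  rw [← he]
  omega
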